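/- Let A be a prime ring and e ∈ A a nonzero idempotent such that the corner ring eAe is a field. Then A is (right) primitive. -/

import Mathlib

universe u

lemma prime_elementwise {A : Type u} [Ring A]
    (hprime : ∀ I J : TwoSidedIdeal A, (∀ x ∈ I, ∀ y ∈ J, x * y = 0) → I = ⊥ ∨ J = ⊥)
    (a b : A) (hab : ∀ x : A, a * x * b = 0) : a = 0 ∨ b = 0 := by
  -- J : two-sided ideal of elements annihilated on the left by a * u
  let J : TwoSidedIdeal A := TwoSidedIdeal.mk' {y | ∀ u : A, a * u * y = 0}
    (fun u => by simp)
    (fun {x y} hx hy u => by rw [mul_add, hx u, hy u, add_zero])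
    (fun {x} hx u => by rw [mul_neg, hx u, neg_zero])
    (fun {x y} hy u => by rw [show a * u * (x * y) = a * (u * x) * y by simp [mul_assoc], hy (u * x)])
    (fun {x y} hx u => by rw [show a * u * (x * y) = a * u * x * y by simp [mul_assoc], hx u, zero_mul])
  have hJ : ∀ y : A, y ∈ J ↔ ∀ u : A, a * u * y = 0 := fun y =>
    TwoSidedIdeal.mem_mk' _ _ _ _ _ _ y
  -- I : left annihilator of J
  let I : TwoSidedIdeal A := TwoSidedIdeal.mk' {x | ∀ y ∈ J, x * y = 0}
    (fun y _ => by simp)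
    (fun {x x'} hx hx' y hy => by rw [add_mul, hx y hy, hx' y hy, add_zero])
    (fun {x} hx y hy => by rw [neg_mul, hx y hy, neg_zero])
    (fun {r x} hx y hy => by rw [mul_assoc, hx y hy, mul_zero])
    (fun {x r} hx y hy => by rw [mul_assoc, hx (r * y) (J.mul_mem_left r y hy)])
  have hI : ∀ x : A, x ∈ I ↔ ∀ y ∈ J, x * y = 0 := fun x =>
    TwoSidedIdeal.mem_mk' _ _ _ _ _ _ x
  have haI : a ∈ I := (hI a).mpr (fun y hy => by
    have := (hJ y).mp hy 1
    rwa [mul_one] at this)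
  have hbJ : b ∈ J := (hJ b).mpr hab
  rcases hprime I J (fun x hx y hy => (hI x).mp hx y hy) with h | h
  · left; rw [h] at haI; exact haI
  · right; rw [h] at hbJ; exact hbJ

/-- Let `A` be a prime ring and `e ∈ A` a nonzero idempotent such that the corner ring
`eAe` is a field (multiplication of corner elements is commutative and every nonzero
corner element has an inverse in the corner, with identity `e`).  Then `A` is right
primitive: it has a faithful simple right module (a module over `Aᵐᵒᵖ`). -/
theorem primitive_of_prime_with_field_corner (A : Type u) [Ring A]
    (hprime : ∀ I J : TwoSidedIdeal A, (∀ x ∈ I, ∀ y ∈ J, x * y = 0) → I = ⊥ ∨ J = ⊥)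
    (e : A) (he : e * e = e) (hene : e ≠ 0)
    (hcomm : ∀ x y : A, (e * x * e) * (e * y * e) = (e * y * e) * (e * x * e))
    (hinv : ∀ x : A, e * x * e ≠ 0 → ∃ y : A, (e * x * e) * (e * y * e) = e) :
    ∃ (V : Type u) (_ : AddCommGroup V) (_ : Module Aᵐᵒᵖ V),
      IsSimpleModule Aᵐᵒᵖ V ∧ FaithfulSMul Aᵐᵒᵖ V := by
  classical
  have hp := prime_elementwise hprime
  -- V = eA, realized as the subtype {x // e * x = x}
  letI instACG : AddCommGroup {x : A // e * x = x} :=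
    { add := fun x y => ⟨x.1 + y.1, by rw [mul_add, x.2, y.2]⟩
      add_assoc := fun x y z => Subtype.ext (add_assoc _ _ _)
      zero := ⟨0, by rw [mul_zero]⟩
      zero_add := fun x => Subtype.ext (zero_add _)
      add_zero := fun x => Subtype.ext (add_zero _)
      nsmul := fun n x => ⟨n • x.1, by rw [mul_smul_comm, x.2]⟩
      nsmul_zero := fun x => Subtype.ext (zero_smul ℕ _)
      nsmul_succ := fun n x => Subtype.ext (succ_nsmul _ _)
      neg := fun x => ⟨-x.1, by rw [mul_neg, x.2]⟩
      zsmul := fun n x => ⟨n • x.1, by rw [mul_smul_comm, x.2]⟩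
      zsmul_zero' := fun x => Subtype.ext (zero_smul ℤ _)
      zsmul_succ' := fun n x => Subtype.ext (SubNegMonoid.zsmul_succ' n x.1)
      zsmul_neg' := fun n x => Subtype.ext (SubNegMonoid.zsmul_neg' n x.1)
      neg_add_cancel := fun x => Subtype.ext (neg_add_cancel _)
      add_comm := fun x y => Subtype.ext (add_comm _ _) }
  letI instMod : Module Aᵐᵒᵖ {x : A // e * x = x} :=
    { smul := fun r x => ⟨x.1 * r.unop, by rw [← mul_assoc, x.2]⟩
      one_smul := fun x => Subtype.ext (mul_one _)
      mul_smul := fun r s x => Subtype.ext (mul_assoc _ _ _).symm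
      smul_zero := fun r => Subtype.ext (zero_mul _)
      smul_add := fun r x y => Subtype.ext (add_mul _ _ _)
      add_smul := fun r s x => Subtype.ext (mul_add _ _ _)
      zero_smul := fun x => Subtype.ext (mul_zero _) }
  refine ⟨{x : A // e * x = x}, instACG, instMod, ?_, ?_⟩
  · -- simplicity
    haveI : Nontrivial (Submodule Aᵐᵒᵖ {x : A // e * x = x}) := by
      refine ⟨⊥, ⊤, fun h => ?_⟩
      have : (⟨e, he⟩ : {x : A // e * x = x}) ∈ (⊥ : Submodule Aᵐᵒᵖ {x : A // e * x = x}) := by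
        rw [h]; trivial
      exact hene (congrArg Subtype.val this)
    refine { toIsSimpleOrder := { eq_bot_or_eq_top := ?_ } }
    intro N
    by_cases hN : N = ⊥
    · left; exact hN
    right
    -- find a nonzero element of N
    obtain ⟨v, hvN, hv0⟩ : ∃ v, v ∈ N ∧ v ≠ (0 : {x : A // e * x = x}) := by
      by_contra h
      push_neg at h
      exact hN (eq_bot_iff.mpr fun v hv => h v hv)
    have hx0 : v.1 ≠ 0 := fun h => hv0 (Subtype.ext h)
    have hex : e * v.1 = v.1 := v.2
    -- find u with v.1 * u * e ≠ 0
    obtain ⟨u, hu⟩ : ∃ u : A, v.1 * u * e ≠ 0 := by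
      by_contra h
      push_neg at h
      rcases hp v.1 e h with h' | h'
      · exact hx0 h'
      · exact hene h'
    have hcorner : e * (v.1 * u) * e ≠ 0 := by
      rwa [← mul_assoc, hex]
    obtain ⟨y, hy⟩ := hinv _ hcorner
    -- v • (u * e * y * e) = e
    have key : v.1 * (u * e * y * e) = e := by
      have h2 : v.1 * (u * e * y * e) = e * (v.1 * u) * e * (e * y * e) := by
        rw [← mul_assoc e v.1 u, hex]
        simp only [mul_assoc]
        rw [← mul_assoc e e (y * e), he]
      rw [h2, hy]
    have heN : (⟨e, he⟩ : {x : A // e * x = x}) ∈ N := by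
      have := N.smul_mem (MulOpposite.op (u * e * y * e)) hvN
      convert this using 1
      exact Subtype.ext key.symm
    -- every element is a right multiple of e
    rw [eq_top_iff]
    intro w _
    have : (MulOpposite.op w.1) • (⟨e, he⟩ : {x : A // e * x = x}) = w := by
      exact Subtype.ext w.2
    rw [← this]
    exact N.smul_mem _ heN
  · -- faithfulness
    constructor
    intro r s h
    have hz : ∀ z : A, e * z * r.unop = e * z * s.unop := by
      intro z
      have := h ⟨e * z, by rw [← mul_assoc, he]⟩
      have := congrArg Subtype.val this
      exact this
    have : ∀ z : A, e * z * (r.unop - s.unop) = 0 := by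
      intro z
      rw [mul_sub, hz z, sub_self]
    rcases hp e (r.unop - s.unop) this with h' | h'
    · exact absurd h' hene
    · have : r.unop = s.unop := sub_eq_zero.mp h'
      exact MulOpposite.unop_injective this
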